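/- Let X be a T₁ topological space and f : X → X a continuous map. Then the set of periodic points of f equals the intersection of all right-absorbing open subsets of X: P(X) = L(X^r). -/
import Mathlib


open Set Topology

/-- The omega-limit set of a point `x` under the discrete semi-flow generated by `f`:
`Λ(x) = ⋂ₙ closure {f^[m] x : m ≥ n}`. -/
def Lambda {X : Type*} [TopologicalSpace X] (f : X → X) (x : X) : Set X :=
  ⋂ n : ℕ, closure ((fun m => f^[m] x) '' Set.Ici n)

/-- The omega-limit set of a subset `S`: `Λ(S) = ⋃_{x ∈ S} Λ(x)`. -/
def LambdaSet {X : Type*} [TopologicalSpace X] (f : X → X) (S : Set X) : Set X :=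
  ⋃ x ∈ S, Lambda f x

/-- The region of pseudo-attraction of `S`: `PA(S) = {x : Λ(x) ⊆ S}`. -/
def PA {X : Type*} [TopologicalSpace X] (f : X → X) (S : Set X) : Set X :=
  {x | Lambda f x ⊆ S}

/-- The region of weak-attraction of `S`: `WA(S) = {x : Λ(x) ∩ S ≠ ∅}`. -/
def WA {X : Type*} [TopologicalSpace X] (f : X → X) (S : Set X) : Set X :=
  {x | (Lambda f x ∩ S).Nonempty}

/-- The region of attraction of `S`: `A(S) = {x : ∅ ≠ Λ(x) ⊆ S}`. -/
def RA {X : Type*} [TopologicalSpace X] (f : X → X) (S : Set X) : Set X :=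
  {x | (Lambda f x).Nonempty ∧ Lambda f x ⊆ S}

/-- `X` is (positively) Lagrange stable at `x` if the closure of the trajectory of `x`
is compact. -/
def LagrangeStableAt {X : Type*} [TopologicalSpace X] (f : X → X) (x : X) : Prop :=
  IsCompact (closure (Set.range fun n : ℕ => f^[n] x))

/-- An externology on a topological space: a nonempty family of open sets closed under
finite intersections such that any open set containing a member belongs to the family. -/
def IsExternology {X : Type*} [TopologicalSpace X] (ε : Set (Set X)) : Prop :=
  ε.Nonempty ∧ (∀ E ∈ ε, IsOpen E) ∧ (∀ E ∈ ε, ∀ F ∈ ε, E ∩ F ∈ ε) ∧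
    (∀ E ∈ ε, ∀ U : Set X, IsOpen U → E ⊆ U → U ∈ ε)

/-- The limit space of an externology: `L(X) = ⋂_{E ∈ ε} E`. -/
def limitSpace {X : Type*} (ε : Set (Set X)) : Set X := ⋂ E ∈ ε, E

/-- The bar-limit space of an externology: `L̄(X) = ⋂_{E ∈ ε} closure E`. -/
def barLimit {X : Type*} [TopologicalSpace X] (ε : Set (Set X)) : Set X :=
  ⋂ E ∈ ε, closure E

/-- The region of pseudo-attraction of the externology:
`D(X) = {x : ∀ E ∈ ε, f^[m] x ∈ E for all large m}`. -/
def Dregion {X : Type*} (f : X → X) (ε : Set (Set X)) : Set X :=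
  {x | ∀ E ∈ ε, ∃ n : ℕ, ∀ m ≥ n, f^[m] x ∈ E}

/-- The region of pseudo-bar-attraction of the externology:
`D̄(X) = {x : ∀ E ∈ ε, f^[m] x ∈ closure E for all large m}`. -/
def Dbar {X : Type*} [TopologicalSpace X] (f : X → X) (ε : Set (Set X)) : Set X :=
  {x | ∀ E ∈ ε, ∃ n : ℕ, ∀ m ≥ n, f^[m] x ∈ closure E}

/-- A right-absorbing open subset: an open set that eventually contains the trajectory
of every point. -/
def RightAbsorbing {X : Type*} [TopologicalSpace X] (f : X → X) (E : Set X) : Prop :=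
  IsOpen E ∧ ∀ y : X, ∃ n : ℕ, ∀ m ≥ n, f^[m] y ∈ E

/-- A point `x` is periodic if `f^[n] x = x` for some `n ≥ 1`. -/
def IsPeriodicPoint {X : Type*} (f : X → X) (x : X) : Prop := ∃ n ≥ 1, f^[n] x = x

theorem stmt15 {X : Type*} [TopologicalSpace X] [T1Space X] (f : X → X)
    (hf : Continuous f) :
    {x | IsPeriodicPoint f x} = ⋂ E ∈ {E : Set X | RightAbsorbing f E}, E := by
  ext x
  simp only [mem_setOf_eq, mem_iInter]
  constructor
  · rintro ⟨n, hn, hfx⟩ E hE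
    obtain ⟨N, hN⟩ := hE.2 x
    have hper : f^[n * N] x = x := by
      rw [Function.iterate_mul]
      exact Function.iterate_fixed hfx N
    have := hN (n * N) (Nat.le_mul_of_pos_left N hn)
    rwa [hper] at this
  · intro h
    by_contra hx
    have hE : RightAbsorbing f ({x}ᶜ) := by
      refine ⟨isClosed_singleton.isOpen_compl, fun y => ?_⟩
      by_cases hy : ∃ m : ℕ, f^[m] y = x
      · obtain ⟨m, hm⟩ := hy
        refine ⟨m + 1, fun k hk hkx => ?_⟩
        simp only [mem_singleton_iff] at hkx
        apply hx
        refine ⟨k - m, by omega, ?_⟩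
        have : f^[k - m] (f^[m] y) = x := by
          rw [← Function.iterate_add_apply]
          rwa [Nat.sub_add_cancel (by omega)]
        rw [hm] at this
        exact this
      · exact ⟨0, fun k _ hkx => hy ⟨k, by simpa using hkx⟩⟩
    exact (h _ hE) rfl
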